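/- Let Ω ⊂ ℝ^n be compact, g : Ω → ℝ^n Lipschitz continuous, V : Ω → ℝ Lipschitz continuous, and let a, b₁, b₂ > 0 and V_{∂𝒜} > 0 be constants. Let 𝒜 := {y ∈ Ω : V(y) ≤ V_{∂𝒜}} and suppose 𝒜 ⊆ Ω° and 0 ∈ 𝒜°. Let 𝒜₁ be compact with 0 ∈ 𝒜₁° and 𝒜₁ ⊆ 𝒜°. Assume b₁‖y‖^a ≤ V(y) for all y ∈ 𝒜, and that D⁺V(y) ≤ −b₂ V(y) for all y ∈ 𝒜 \ 𝒜₁°, where D⁺V(y) := limsup_{h→0⁺}(V(y + h·g(y)) − V(y))/h. Then for every continuous x : [t₀, T) → Ω that is differentiable with x'(t) = g(x(t)) for all t and satisfies x(t₀) ∈ 𝒜: (i) x(t) ∈ 𝒜 for all t ∈ [t₀, T), i.e., 𝒜 is positively invariant; (ii) if x(t₀) ∈ (𝒜 \ 𝒜₁)°, then ‖x(t)‖ ≤ (V_{∂𝒜}/b₁)^{1/a} · e^{−(b₂/a)(t − t₀)} holds for every t ∈ [t₀, T) such that x(s) ∈ 𝒜 \ 𝒜₁° for all s ∈ [t₀,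 t]; (iii) if moreover T = ∞ and x(t₀) ∈ (𝒜 \ 𝒜₁)°, then there exists a finite t₁ ≥ t₀ with x(t₁) ∈ ∂𝒜₁ (the state reaches the boundary of 𝒜₁ in finite time). -/

import Mathlib

open Filter Topology Set
open scoped BigOperators

set_option maxHeartbeats 1000000 in
/-- barrier-function lemma: the sublevel set `𝒜 = {y ∈ Ω : V(y) ≤ V_∂𝒜}`
is positively invariant; while the trajectory stays in `𝒜 \ 𝒜₁°` the state norm decays
exponentially; and (for `T = ∞`) starting in `(𝒜 \ 𝒜₁)°` the state reaches `∂𝒜₁`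
in finite time.  (`T ≤ ∞` is encoded as `T : EReal`.) -/
theorem stmt8 (n : ℕ)
    (Ω : Set (EuclideanSpace ℝ (Fin n))) (hΩc : IsCompact Ω)
    (g : EuclideanSpace ℝ (Fin n) → EuclideanSpace ℝ (Fin n))
    (hg : ∃ L : ℝ, 0 ≤ L ∧ ∀ y ∈ Ω, ∀ y' ∈ Ω, ‖g y - g y'‖ ≤ L * ‖y - y'‖)
    (V : EuclideanSpace ℝ (Fin n) → ℝ)
    (hVlip : ∃ L : ℝ, 0 ≤ L ∧ ∀ y ∈ Ω, ∀ y' ∈ Ω, |V y - V y'| ≤ L * ‖y - y'‖)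
    (a b₁ b₂ VA : ℝ) (ha : 0 < a) (hb₁ : 0 < b₁) (hb₂ : 0 < b₂) (hVA : 0 < VA)
    (A : Set (EuclideanSpace ℝ (Fin n))) (hAdef : A = {y | y ∈ Ω ∧ V y ≤ VA})
    (hAsub : A ⊆ interior Ω)
    (h0A : (0 : EuclideanSpace ℝ (Fin n)) ∈ interior A)
    (A₁ : Set (EuclideanSpace ℝ (Fin n))) (hA₁c : IsCompact A₁)
    (h0A₁ : (0 : EuclideanSpace ℝ (Fin n)) ∈ interior A₁)
    (hA₁A : A₁ ⊆ interior A)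
    (hlow : ∀ y ∈ A, b₁ * ‖y‖ ^ a ≤ V y)
    (hdini : ∀ y ∈ A \ interior A₁,
      Filter.limsup (fun h : ℝ => (((V (y + h • g y) - V y) / h : ℝ) : EReal)) (𝓝[>] (0 : ℝ))
        ≤ ((-b₂ * V y : ℝ) : EReal))
    -- a solution x : [t₀, T) → Ω of ẋ = g(x) starting in 𝒜
    (t₀ : ℝ) (T : EReal) (hT : (t₀ : EReal) < T)
    (x : ℝ → EuclideanSpace ℝ (Fin n))
    (hmem : ∀ t : ℝ, t₀ ≤ t → (t : EReal) < T → x t ∈ Ω)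
    (hode : ∀ t : ℝ, t₀ ≤ t → (t : EReal) < T →
      HasDerivWithinAt x (g (x t)) {s : ℝ | t₀ ≤ s ∧ (s : EReal) < T} t)
    (hinit : x t₀ ∈ A) :
    -- (i) positive invariance of 𝒜
    (∀ t : ℝ, t₀ ≤ t → (t : EReal) < T → x t ∈ A) ∧
    -- (ii) exponential decay of the state norm while in 𝒜 \ 𝒜₁°
    (x t₀ ∈ interior (A \ A₁) →
      ∀ t : ℝ, t₀ ≤ t → (t : EReal) < T →
        (∀ s : ℝ, t₀ ≤ s → s ≤ t → x s ∈ A \ interior A₁) →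
        ‖x t‖ ≤ (VA / b₁) ^ (1 / a) * Real.exp (-(b₂ / a) * (t - t₀))) ∧
    -- (iii) the boundary of 𝒜₁ is reached in finite time
    (T = ⊤ → x t₀ ∈ interior (A \ A₁) →
      ∃ t₁ : ℝ, t₀ ≤ t₁ ∧ x t₁ ∈ frontier A₁) := by
  clear hg
  obtain ⟨L, hL0, hLV⟩ := hVlip
  set dom : Set ℝ := {s : ℝ | t₀ ≤ s ∧ (s : EReal) < T} with hdomdef
  have hVA' : ∀ y ∈ A, V y ≤ VA := by intro y hy; rw [hAdef] at hy; exact hy.2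
  have hmemA : ∀ {y}, y ∈ Ω → V y ≤ VA → y ∈ A := by
    intro y h1 h2; rw [hAdef]; exact ⟨h1, h2⟩
  have hVcont : ContinuousOn V Ω := by
    have hlip : LipschitzOnWith (Real.toNNReal L) V Ω := by
      apply LipschitzOnWith.of_dist_le'
      intro p hp q hq
      rw [Real.dist_eq, dist_eq_norm]
      exact hLV p hp q hq
    exact hlip.continuousOn
  have hxcw : ∀ t, t₀ ≤ t → (t : EReal) < T → ContinuousWithinAt x dom t :=
    fun t h1 h2 => (hode t h1 h2).continuousWithinAt
  -- KEY: Dini-type estimate for V ∘ x along the flow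
  have KEY : ∀ s : ℝ, t₀ ≤ s → (s : EReal) < T → x s ∈ A \ interior A₁ →
      ∀ r : ℝ, -b₂ * V (x s) < r →
      ∀ᶠ z in 𝓝[>] s, (V (x z) - V (x s)) / (z - s) < r := by
    intro s hs1 hs2 hxs r hr
    obtain ⟨c, hsc, hcT⟩ := EReal.exists_between_coe_real hs2
    rw [EReal.coe_lt_coe_iff] at hsc
    have hIoo : Ioo s c ⊆ dom := fun u hu =>
      ⟨hs1.trans hu.1.le, lt_trans (EReal.coe_lt_coe_iff.2 hu.2) hcT⟩
    have hmemIoo : Ioo s c ∈ 𝓝[>] s := Ioo_mem_nhdsGT_of_mem ⟨le_rfl, hsc⟩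
    have hledom : 𝓝[>] s ≤ 𝓝[dom] s :=
      nhdsWithin_le_of_mem (mem_of_superset hmemIoo hIoo)
    set y := x s with hy
    set r' := (-b₂ * V y + r) / 2 with hr'def
    have h1 : -b₂ * V y < r' := by rw [hr'def]; linarith
    have h2 : r' < r := by rw [hr'def]; linarith
    set ε := (r - r') / (L + 1) with hεdef
    have hεpos : 0 < ε := div_pos (by linarith) (by linarith)
    have hDr' : ∀ᶠ h in 𝓝[>] (0 : ℝ), (V (y + h • g y) - V y) / h < r' := by
      have hlt : Filter.limsup (fun h : ℝ => (((V (y + h • g y) - V y) / h : ℝ) : EReal))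
          (𝓝[>] (0 : ℝ)) < (r' : EReal) :=
        lt_of_le_of_lt (hdini y hxs) (by exact_mod_cast h1)
      filter_upwards [Filter.eventually_lt_of_limsup_lt hlt] with h hh
      exact_mod_cast hh
    have hmap : Filter.Tendsto (fun z : ℝ => z - s) (𝓝[>] s) (𝓝[>] (0 : ℝ)) := by
      apply tendsto_nhdsWithin_of_tendsto_nhds_of_eventually_within
      · have h3 : Filter.Tendsto (fun z : ℝ => z - s) (𝓝 s) (𝓝 0) := by
          simpa using (continuous_sub_right s).tendsto s
        exact h3.mono_left nhdsWithin_le_nhds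
      · filter_upwards [self_mem_nhdsWithin] with z hz
        exact sub_pos.2 (mem_Ioi.1 hz)
    have hDz : ∀ᶠ z in 𝓝[>] s, (V (y + (z - s) • g y) - V y) / (z - s) < r' :=
      hmap.eventually hDr'
    have hyΩ : y ∈ interior Ω := hAsub hxs.1
    have hnear : ∀ᶠ z in 𝓝[>] s, y + (z - s) • g y ∈ Ω := by
      have hc2 : Filter.Tendsto (fun z : ℝ => y + (z - s) • g y) (𝓝 s) (𝓝 y) := by
        have hcont : Continuous fun z : ℝ => y + (z - s) • g y :=
          continuous_const.add ((continuous_id.sub continuous_const).smul continuous_const)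
        have h4 := hcont.tendsto s
        simpa using h4
      have hev : ∀ᶠ z in 𝓝 s, y + (z - s) • g y ∈ interior Ω :=
        hc2 (isOpen_interior.mem_nhds hyΩ)
      filter_upwards [nhdsWithin_le_nhds hev] with z hz
      exact interior_subset hz
    have hder := hode s hs1 hs2
    rw [hasDerivWithinAt_iff_isLittleO] at hder
    have hderF : ∀ᶠ z in 𝓝[>] s, ‖x z - y - (z - s) • g y‖ ≤ ε * ‖z - s‖ :=
      hledom (hder.def hεpos)
    filter_upwards [hderF, hDz, hnear, eventually_mem_nhdsWithin, hmemIoo] with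
      z hz1 hz2 hz3 hz4 hz5
    have hzs : 0 < z - s := sub_pos.2 hz4
    have hxzΩ : x z ∈ Ω := hmem z (hIoo hz5).1 (hIoo hz5).2
    have hlip := hLV (x z) hxzΩ (y + (z - s) • g y) hz3
    have e1 : V (x z) - V (y + (z - s) • g y) ≤ L * (ε * (z - s)) := by
      have h3 : V (x z) - V (y + (z - s) • g y) ≤ L * ‖x z - (y + (z - s) • g y)‖ :=
        le_trans (le_abs_self _) hlip
      rw [sub_add_eq_sub_sub] at h3
      have h4 : ‖x z - y - (z - s) • g y‖ ≤ ε * (z - s) := by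
        rw [Real.norm_eq_abs, abs_of_pos hzs] at hz1
        exact hz1
      nlinarith [norm_nonneg (x z - y - (z - s) • g y)]
    have e2 : V (y + (z - s) • g y) - V y < (z - s) * r' := by
      rw [div_lt_iff₀ hzs] at hz2; linarith
    rw [div_lt_iff₀ hzs]
    have key1 : L * ε + r' < r := by
      have hLε : (L + 1) * ε = r - r' := by
        rw [hεdef]; field_simp
      nlinarith
    nlinarith [mul_lt_mul_of_pos_left key1 hzs]
  -- some interval facts
  have hIccdom : ∀ {t : ℝ}, (t : EReal) < T → Icc t₀ t ⊆ dom := by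
    intro t ht u hu
    exact ⟨hu.1, lt_of_le_of_lt (EReal.coe_le_coe_iff.2 hu.2) ht⟩
  have hfc : ∀ {t : ℝ}, t₀ ≤ t → (t : EReal) < T →
      ContinuousOn (fun u => V (x u)) (Icc t₀ t) := by
    intro t ht1 ht2
    have hxc : ContinuousOn x (Icc t₀ t) := fun u hu =>
      ((hxcw u hu.1 (lt_of_le_of_lt (EReal.coe_le_coe_iff.2 hu.2) ht2)).mono (hIccdom ht2))
    exact hVcont.comp hxc fun u hu =>
      hmem u hu.1 (lt_of_le_of_lt (EReal.coe_le_coe_iff.2 hu.2) ht2)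
  -- (i) positive invariance
  have INV : ∀ t : ℝ, t₀ ≤ t → (t : EReal) < T → x t ∈ A := by
    intro t ht1 ht2
    refine hmemA (hmem t ht1 ht2) ?_
    by_contra hgt
    push_neg at hgt
    have hfcont : ContinuousOn (fun u => V (x u)) (Icc t₀ t) := hfc ht1 ht2
    set S : Set ℝ := {u | u ∈ Icc t₀ t ∧ VA < V (x u)} with hSdef
    have htS : t ∈ S := ⟨⟨ht1, le_rfl⟩, hgt⟩
    have hSne : S.Nonempty := ⟨t, htS⟩
    have hSbdd : BddBelow S := ⟨t₀, fun u hu => hu.1.1⟩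
    set s := sInf S with hsdef
    have hst : s ≤ t := csInf_le hSbdd htS
    have ht₀s : t₀ ≤ s := le_csInf hSne fun u hu => hu.1.1
    have hsT : (s : EReal) < T := lt_of_le_of_lt (EReal.coe_le_coe_iff.2 hst) ht2
    have hsIcc : s ∈ Icc t₀ t := ⟨ht₀s, hst⟩
    have hfsge : VA ≤ V (x s) := by
      have hC : IsClosed (Icc t₀ t ∩ {u | VA ≤ V (x u)}) :=
        hfcont.preimage_isClosed_of_isClosed isClosed_Icc isClosed_Ici
      have hsub : S ⊆ Icc t₀ t ∩ {u | VA ≤ V (x u)} := fun u hu => ⟨hu.1, hu.2.le⟩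
      have hmem2 := (hC.closure_subset_iff.2 hsub) (csInf_mem_closure hSne hSbdd)
      exact hmem2.2
    have hfsle : V (x s) ≤ VA := by
      by_contra hfs
      push_neg at hfs
      have hsne : s ≠ t₀ := by
        intro h
        rw [h] at hfs
        exact absurd (hVA' _ hinit) (not_le.2 hfs)
      have ht₀s' : t₀ < s := lt_of_le_of_ne ht₀s (Ne.symm hsne)
      have hev : ∀ᶠ u in 𝓝[Icc t₀ t] s, VA < V (x u) :=
        (hfcont s hsIcc) (isOpen_Ioi.mem_nhds hfs)
      obtain ⟨δ, hδ, hball⟩ := Metric.mem_nhdsWithin_iff.1 hev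
      set u := max t₀ (s - δ / 2) with hudef
      have hu1 : t₀ ≤ u := le_max_left _ _
      have hus : u < s := max_lt ht₀s' (by linarith)
      have hut : u ≤ t := hus.le.trans hst
      have hdist : dist u s < δ := by
        rw [Real.dist_eq, abs_of_nonpos (by linarith)]
        have h5 : s - δ / 2 ≤ u := le_max_right _ _
        linarith
      have huS : u ∈ S := ⟨⟨hu1, hut⟩, hball ⟨Metric.mem_ball.2 hdist, hu1, hut⟩⟩
      exact absurd (csInf_le hSbdd huS) (not_le.2 hus)
    have hfs : V (x s) = VA := le_antisymm hfsle hfsge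
    have hsltt : s < t := by
      rcases hst.lt_or_eq with h | h
      · exact h
      · exfalso; rw [h] at hfs; exact absurd hfs (ne_of_gt hgt)
    have hfreq : ∀ δ : ℝ, 0 < δ → ∃ u ∈ S, s < u ∧ u < s + δ := by
      intro δ hδ
      by_contra hcon
      push_neg at hcon
      have hged : ∀ u ∈ S, s + δ ≤ u := by
        intro u hu
        have hsu : s < u := by
          rcases (csInf_le hSbdd hu).lt_or_eq with h | h
          · exact h
          · exact absurd (h ▸ hfs) (ne_of_gt hu.2)
        exact hcon u hu hsu
      have h6 := le_csInf hSne hged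
      linarith
    by_cases hint : x s ∈ interior A
    · have hev : ∀ᶠ u in 𝓝[dom] s, x u ∈ interior A :=
        (hxcw s ht₀s hsT) (isOpen_interior.mem_nhds hint)
      obtain ⟨δ, hδ, hball⟩ := Metric.mem_nhdsWithin_iff.1 hev
      obtain ⟨u, huS, hsu, hud⟩ := hfreq (min δ (t - s)) (lt_min hδ (by linarith))
      have hudom : u ∈ dom := hIccdom ht2 huS.1
      have hudist : dist u s < δ := by
        rw [Real.dist_eq, abs_of_pos (by linarith)]
        have h7 := min_le_left δ (t - s)
        linarith
      have hintu : x u ∈ interior A := hball ⟨Metric.mem_ball.2 hudist, hudom⟩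
      exact absurd huS.2 (not_lt.2 (hVA' _ (interior_subset hintu)))
    · have hxint : x s ∈ A \ interior A₁ :=
        ⟨hmemA (hmem s ht₀s hsT) hfs.le, fun hm => hint (hA₁A (interior_subset hm))⟩
      have hrlt : -b₂ * V (x s) < -b₂ * VA / 2 := by
        rw [hfs]; nlinarith
      have hevK := KEY s ht₀s hsT hxint (-b₂ * VA / 2) hrlt
      obtain ⟨δ, hδ, hball⟩ := Metric.mem_nhdsWithin_iff.1 hevK
      obtain ⟨u, huS, hsu, hud⟩ := hfreq δ hδ
      have hudist : dist u s < δ := by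
        rw [Real.dist_eq, abs_of_pos (by linarith)]; linarith
      have hslope : (V (x u) - V (x s)) / (u - s) < -b₂ * VA / 2 :=
        hball ⟨Metric.mem_ball.2 hudist, hsu⟩
      have hus' : 0 < u - s := by linarith
      rw [div_lt_iff₀ hus'] at hslope
      have hlt2 : V (x u) < VA := by
        nlinarith [mul_pos (mul_pos hb₂ hVA) hus']
      exact absurd huS.2 (not_lt.2 hlt2.le)
  -- decay of V along trajectories staying in A \ interior A₁
  have DECAY : ∀ t : ℝ, t₀ ≤ t → (t : EReal) < T →
      (∀ s : ℝ, t₀ ≤ s → s ≤ t → x s ∈ A \ interior A₁) →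
      V (x t) ≤ VA * Real.exp (-b₂ * (t - t₀)) := by
    intro t ht1 ht2 hpath
    have hstep : ∀ β : ℝ, 0 < β → β < b₂ → V (x t) ≤ VA * Real.exp (-β * (t - t₀)) := by
      intro β hβ0 hβb
      have hBd : ∀ u : ℝ, HasDerivAt (fun u : ℝ => VA * Real.exp (-β * (u - t₀)))
          (-β * (VA * Real.exp (-β * (u - t₀)))) u := by
        intro u
        have h1 : HasDerivAt (fun u : ℝ => -β * (u - t₀)) (-β) u := by
          simpa using ((hasDerivAt_id u).sub_const t₀).const_mul (-β)
        have h2 := (h1.exp).const_mul VA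
        exact h2.congr_deriv (by ring)
      have hf' : ∀ u ∈ Ico t₀ t, ∀ r, -b₂ * V (x u) < r →
          ∃ᶠ z in 𝓝[>] u, slope (fun u => V (x u)) u z < r := by
        intro u hu r hr
        have huT : (u : EReal) < T := lt_of_le_of_lt (EReal.coe_le_coe_iff.2 hu.2.le) ht2
        have hK := KEY u hu.1 huT (hpath u hu.1 hu.2.le) r hr
        apply Filter.Eventually.frequently
        filter_upwards [hK] with z hz
        simpa [slope_def_field] using hz
      have ha0 : V (x t₀) ≤ VA * Real.exp (-β * (t₀ - t₀)) := by
        simp only [sub_self, mul_zero, Real.exp_zero, mul_one]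
        exact hVA' _ hinit
      have hbound : ∀ u ∈ Ico t₀ t, V (x u) = VA * Real.exp (-β * (u - t₀)) →
          -b₂ * V (x u) < -β * (VA * Real.exp (-β * (u - t₀))) := by
        intro u hu hcontact
        have hBpos : (0 : ℝ) < VA * Real.exp (-β * (u - t₀)) := by positivity
        rw [hcontact]
        nlinarith [mul_pos (sub_pos.2 hβb) hBpos]
      exact image_le_of_liminf_slope_right_lt_deriv_boundary
        (f := fun u => V (x u)) (f' := fun u => -b₂ * V (x u))
        (hfc ht1 ht2) hf' ha0 hBd hbound ⟨ht1, le_rfl⟩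
    have hcont : Filter.Tendsto (fun β : ℝ => VA * Real.exp (-β * (t - t₀))) (𝓝[<] b₂)
        (𝓝 (VA * Real.exp (-b₂ * (t - t₀)))) := by
      apply Filter.Tendsto.mono_left _ nhdsWithin_le_nhds
      have hcc : Continuous fun β : ℝ => VA * Real.exp (-β * (t - t₀)) :=
        continuous_const.mul (Real.continuous_exp.comp (continuous_neg.mul continuous_const))
      exact hcc.tendsto b₂
    refine ge_of_tendsto hcont ?_
    filter_upwards [Ioo_mem_nhdsLT_of_mem (show b₂ ∈ Ioc (0:ℝ) b₂ from ⟨hb₂, le_rfl⟩)] with β hβ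
    exact hstep β hβ.1 hβ.2
  refine ⟨INV, ?_, ?_⟩
  · -- (ii)
    intro _ t ht1 ht2 hpath
    have hV := DECAY t ht1 ht2 hpath
    have hlb := hlow _ (hpath t ht1 le_rfl).1
    have hnn : (0 : ℝ) ≤ ‖x t‖ := norm_nonneg _
    have h1 : ‖x t‖ ^ a ≤ (VA / b₁) * Real.exp (-b₂ * (t - t₀)) := by
      rw [div_mul_eq_mul_div, le_div_iff₀ hb₁]
      nlinarith
    have h2 : ‖x t‖ = (‖x t‖ ^ a) ^ (1 / a) := by
      rw [one_div, Real.rpow_rpow_inv hnn (ne_of_gt ha)]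
    rw [h2]
    have h3 : ((VA / b₁) * Real.exp (-b₂ * (t - t₀))) ^ (1 / a)
        = (VA / b₁) ^ (1 / a) * Real.exp (-(b₂ / a) * (t - t₀)) := by
      rw [Real.mul_rpow (by positivity) (Real.exp_nonneg _), ← Real.exp_mul]
      have h4 : -b₂ * (t - t₀) * (1 / a) = -(b₂ / a) * (t - t₀) := by
        field_simp
      rw [h4]
    rw [← h3]
    exact Real.rpow_le_rpow (Real.rpow_nonneg hnn a) h1 (by positivity)
  · -- (iii)
    rintro rfl hstart
    by_contra hno
    push_neg at hno
    have hx0 : x t₀ ∈ A \ A₁ := interior_subset hstart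
    have hTlt : ∀ u : ℝ, (u : EReal) < (⊤ : EReal) := fun u => EReal.coe_lt_top u
    have hnotA₁ : ∀ t : ℝ, t₀ ≤ t → x t ∉ A₁ := by
      intro t ht hmem1
      have hxc : ContinuousOn x (Icc t₀ t) := fun u hu =>
        ((hxcw u hu.1 (hTlt u)).mono (hIccdom (hTlt t)))
      set S : Set ℝ := Icc t₀ t ∩ {u | x u ∈ A₁} with hSdef
      have hSclosed : IsClosed S :=
        hxc.preimage_isClosed_of_isClosed isClosed_Icc hA₁c.isClosed
      have hSne : S.Nonempty := ⟨t, ⟨ht, le_rfl⟩, hmem1⟩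
      have hSbdd : BddBelow S := ⟨t₀, fun u hu => hu.1.1⟩
      have hsS := hSclosed.csInf_mem hSne hSbdd
      set s := sInf S with hsdef
      have hxsA₁ : x s ∈ A₁ := hsS.2
      have hsIcc : s ∈ Icc t₀ t := hsS.1
      have hst₀ : t₀ < s := by
        rcases hsIcc.1.lt_or_eq with h | h
        · exact h
        · exfalso; rw [← h] at hxsA₁; exact hx0.2 hxsA₁
      have hsfront : x s ∈ frontier A₁ := by
        rw [hA₁c.isClosed.frontier_eq]
        refine ⟨hxsA₁, ?_⟩
        intro hintmem
        have hev : ∀ᶠ u in 𝓝[Icc t₀ t] s, x u ∈ interior A₁ :=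
          (hxc s hsIcc) (isOpen_interior.mem_nhds hintmem)
        obtain ⟨δ, hδ, hball⟩ := Metric.mem_nhdsWithin_iff.1 hev
        set u := max t₀ (s - δ / 2) with hudef
        have hu1 : t₀ ≤ u := le_max_left _ _
        have hus : u < s := max_lt hst₀ (by linarith)
        have hut : u ≤ t := hus.le.trans hsIcc.2
        have hdist : dist u s < δ := by
          rw [Real.dist_eq, abs_of_nonpos (by linarith)]
          have h5 : s - δ / 2 ≤ u := le_max_right _ _
          linarith
        have hxu : x u ∈ interior A₁ := hball ⟨Metric.mem_ball.2 hdist, hu1, hut⟩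
        have huS : u ∈ S := ⟨⟨hu1, hut⟩, show x u ∈ A₁ from interior_subset hxu⟩
        exact absurd (csInf_le hSbdd huS) (not_le.2 hus)
      exact hno s hsIcc.1 hsfront
    have hpath : ∀ t : ℝ, t₀ ≤ t → x t ∈ A \ interior A₁ := fun t ht =>
      ⟨INV t ht (hTlt t), fun hm => hnotA₁ t ht (interior_subset hm)⟩
    obtain ⟨ε, hε, hball0⟩ := Metric.mem_nhds_iff.1 (mem_interior_iff_mem_nhds.1 h0A₁)
    have hεnorm : ∀ t : ℝ, t₀ ≤ t → ε ≤ ‖x t‖ := by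
      intro t ht
      by_contra hcon
      push_neg at hcon
      exact hnotA₁ t ht (hball0 (mem_ball_zero_iff.2 hcon))
    set M := b₁ * ε ^ a with hMdef
    have hεa : (0 : ℝ) < ε ^ a := Real.rpow_pos_of_pos hε a
    have hMpos : 0 < M := mul_pos hb₁ hεa
    set t := t₀ + max 0 (Real.log (VA / M) / b₂) + 1 with htdef
    have ht1 : t₀ ≤ t := by
      have h6 := le_max_left 0 (Real.log (VA / M) / b₂)
      rw [htdef]; linarith
    have hVle := DECAY t ht1 (hTlt t) (fun s hs1 _ => hpath s hs1)
    have hMle : M ≤ V (x t) := by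
      have h7 : ε ^ a ≤ ‖x t‖ ^ a := Real.rpow_le_rpow hε.le (hεnorm t ht1) ha.le
      have h8 := hlow _ (hpath t ht1).1
      rw [hMdef]
      nlinarith
    have hdelta : Real.log (VA / M) / b₂ < t - t₀ := by
      have h9 := le_max_right 0 (Real.log (VA / M) / b₂)
      have h10 : t - t₀ = max 0 (Real.log (VA / M) / b₂) + 1 := by rw [htdef]; ring
      linarith
    have h9 : -b₂ * (t - t₀) < -Real.log (VA / M) := by
      have h11 := (div_lt_iff₀ hb₂).1 hdelta
      nlinarith
    have h12 : Real.exp (-b₂ * (t - t₀)) < M / VA := by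
      have h10 : Real.exp (-b₂ * (t - t₀)) < Real.exp (-Real.log (VA / M)) :=
        Real.exp_lt_exp.2 h9
      have h11 : Real.exp (-Real.log (VA / M)) = M / VA := by
        rw [Real.exp_neg, Real.exp_log (by positivity), inv_div]
      rwa [h11] at h10
    have hfin : VA * Real.exp (-b₂ * (t - t₀)) < M := by
      calc VA * Real.exp (-b₂ * (t - t₀)) < VA * (M / VA) :=
            mul_lt_mul_of_pos_left h12 hVA
        _ = M := by field_simp
    linarith
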